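/- If ‖σ1 - σ2‖_F · ‖σ2^{-1}‖_F ≤ 1/2 for symmetric positive definite σ1, σ2, then the Burg divergence satisfies D(σ1|σ2) ≤ (5/2)·‖σ2^{-1}‖_F·‖σ1 - σ2‖_F, where D(σ1|σ2) = Tr(σ1 σ2^{-1} - I) - log det(σ1 σ2^{-1}). -/

import Mathlib

open Matrix

/-- The Frobenius norm of a real square matrix. -/
noncomputable def frob {d : ℕ} (A : Matrix (Fin d) (Fin d) ℝ) : ℝ :=
  Real.sqrt ((Aᵀ * A).trace)

/-- If `‖σ₁ - σ₂‖_F · ‖σ₂⁻¹‖_F ≤ 1/2` for symmetric positive definite `σ₁, σ₂`, then the Burg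
divergence `D(σ₁|σ₂) = Tr(σ₁σ₂⁻¹ - I) - log det(σ₁σ₂⁻¹)` satisfies
`D(σ₁|σ₂) ≤ (5/2)·‖σ₂⁻¹‖_F·‖σ₁ - σ₂‖_F`. -/
lemma trace_transpose_mul (d : ℕ) (A : Matrix (Fin d) (Fin d) ℝ) :
    (Aᵀ * A).trace = ∑ i, ∑ j, (A j i) ^ 2 := by
  simp [Matrix.trace, Matrix.mul_apply, Matrix.diag, sq]

lemma trace_transpose_mul_nonneg (d : ℕ) (A : Matrix (Fin d) (Fin d) ℝ) :
    0 ≤ (Aᵀ * A).trace := by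
  rw [trace_transpose_mul]
  positivity

lemma frob_nonneg {d : ℕ} (A : Matrix (Fin d) (Fin d) ℝ) : 0 ≤ frob A :=
  Real.sqrt_nonneg _

lemma frob_sq {d : ℕ} (A : Matrix (Fin d) (Fin d) ℝ) : frob A ^ 2 = (Aᵀ * A).trace :=
  Real.sq_sqrt (trace_transpose_mul_nonneg d A)

lemma trace_mul_self_le {d : ℕ} (A : Matrix (Fin d) (Fin d) ℝ) :
    (A * A).trace ≤ frob A ^ 2 := by
  rw [frob_sq, trace_transpose_mul]
  have : (A * A).trace = ∑ i, ∑ j, A i j * A j i := by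
    simp [Matrix.trace, Matrix.mul_apply, Matrix.diag]
  rw [this]
  have h2 : ∀ i j : Fin d, A i j * A j i ≤ ((A i j)^2 + (A j i)^2) / 2 := by
    intro i j; nlinarith [sq_nonneg (A i j - A j i)]
  calc ∑ i, ∑ j, A i j * A j i ≤ ∑ i, ∑ j, ((A i j)^2 + (A j i)^2) / 2 := by
        apply Finset.sum_le_sum; intro i _; apply Finset.sum_le_sum; intro j _; exact h2 i j
    _ = ∑ i, ∑ j, (A j i) ^ 2 := by
        simp only [add_div, Finset.sum_add_distrib]
        rw [Finset.sum_comm (f := fun i j => A i j ^ 2 / 2), ← two_mul]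
        rw [Finset.mul_sum]
        congr 1; funext i
        rw [Finset.mul_sum]
        congr 1; funext j
        ring

lemma frob_mul_le {d : ℕ} (A B : Matrix (Fin d) (Fin d) ℝ) :
    frob (A * B) ≤ frob A * frob B := by
  have hsq : frob (A * B) ^ 2 ≤ (frob A * frob B) ^ 2 := by
    rw [frob_sq, mul_pow, frob_sq, frob_sq, trace_transpose_mul, trace_transpose_mul,
      trace_transpose_mul]
    calc ∑ i, ∑ j, ((A * B) j i) ^ 2
        ≤ ∑ i, ∑ j, (∑ k, (A j k) ^ 2) * (∑ k, (B k i) ^ 2) := by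
          apply Finset.sum_le_sum; intro i _
          apply Finset.sum_le_sum; intro j _
          simpa [Matrix.mul_apply] using
            Finset.sum_mul_sq_le_sq_mul_sq Finset.univ (fun k => A j k) (fun k => B k i)
      _ = (∑ i, ∑ j, (A j i) ^ 2) * ∑ i, ∑ j, (B j i) ^ 2 := by
          simp only [← Finset.sum_mul]
          rw [← Finset.mul_sum]
          congr 1
          exact Finset.sum_comm
  have h1 := frob_nonneg (A * B)
  have h2 := mul_nonneg (frob_nonneg A) (frob_nonneg B)
  nlinarith

lemma logbound {y : ℝ} (hy : 1/2 ≤ y) : y - 1 - Real.log y ≤ 2 * (y - 1) ^ 2 := by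
  have hy0 : 0 < y := by linarith
  have h1 : Real.log (1/y) ≤ 1/y - 1 := Real.log_le_sub_one_of_pos (by positivity)
  rw [one_div, Real.log_inv] at h1
  have h2 : 1 - y⁻¹ ≤ Real.log y := by linarith
  have h3 : y * y⁻¹ = 1 := mul_inv_cancel₀ hy0.ne'
  nlinarith [sq_nonneg (y - 1)]

theorem burg_divergence_estimate {d : ℕ} (σ₁ σ₂ : Matrix (Fin d) (Fin d) ℝ)
    (hσ₁ : σ₁.PosDef) (hσ₂ : σ₂.PosDef)
    (h : frob (σ₁ - σ₂) * frob σ₂⁻¹ ≤ 1 / 2) :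
    (σ₁ * σ₂⁻¹ - 1).trace - Real.log ((σ₁ * σ₂⁻¹).det) ≤
      (5 / 2) * frob σ₂⁻¹ * frob (σ₁ - σ₂) := by
  have hdet2 : IsUnit σ₂.det := isUnit_iff_ne_zero.mpr hσ₂.det_pos.ne'
  set Δ : Matrix (Fin d) (Fin d) ℝ := σ₁ - σ₂ with hΔ
  set ε : ℝ := frob σ₂⁻¹ * frob Δ with hε
  have hε0 : 0 ≤ ε := mul_nonneg (frob_nonneg _) (frob_nonneg _)
  have hεhalf : ε ≤ 1/2 := by rw [hε, mul_comm]; exact h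
  -- the square root of σ₂⁻¹
  have hinv : (σ₂⁻¹).PosDef := hσ₂.inv
  set R : Matrix (Fin d) (Fin d) ℝ := (open scoped MatrixOrder in CFC.sqrt σ₂⁻¹) with hRdef
  have hR : R.PosSemidef := by
    open scoped MatrixOrder in exact (CFC.sqrt_nonneg _).posSemidef
  have hRR : R * R = σ₂⁻¹ := by
    open scoped MatrixOrder in exact CFC.sqrt_mul_sqrt_self _ hinv.posSemidef.nonneg
  have hRt : Rᵀ = R := by
    have := hR.1
    rwa [Matrix.IsHermitian, Matrix.conjTranspose_eq_transpose_of_trivial] at this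
  -- R commutes with σ₂
  have hcomm' : R * σ₂⁻¹ = σ₂⁻¹ * R := by rw [← hRR, mul_assoc]
  have hcomm : R * σ₂ = σ₂ * R := by
    have h1 : σ₂ * (R * σ₂⁻¹) * σ₂ = σ₂ * (σ₂⁻¹ * R) * σ₂ := by rw [hcomm']
    calc R * σ₂ = σ₂ * σ₂⁻¹ * (R * σ₂) := by rw [Matrix.mul_nonsing_inv _ hdet2, one_mul]
      _ = σ₂ * (σ₂⁻¹ * R) * σ₂ := by noncomm_ring
      _ = σ₂ * (R * σ₂⁻¹) * σ₂ := h1.symm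
      _ = σ₂ * R * (σ₂⁻¹ * σ₂) := by noncomm_ring
      _ = σ₂ * R := by rw [Matrix.nonsing_inv_mul _ hdet2, mul_one]
  have hRσ₂R : R * σ₂ * R = 1 := by
    rw [hcomm, mul_assoc, hRR, Matrix.mul_nonsing_inv _ hdet2]
  set N : Matrix (Fin d) (Fin d) ℝ := R * σ₁ * R with hNdef
  have hNh : N.IsHermitian := by
    have h1 := hσ₁.1
    rw [Matrix.IsHermitian, Matrix.conjTranspose_eq_transpose_of_trivial] at h1 ⊢
    rw [Matrix.transpose_mul, Matrix.transpose_mul, hRt, h1, ← mul_assoc]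
  set M : Matrix (Fin d) (Fin d) ℝ := R * Δ * R with hMdef
  have hNM : N - 1 = M := by
    rw [hMdef, hΔ, ← hRσ₂R, hNdef]
    noncomm_ring
  have htrN : N.trace = (σ₁ * σ₂⁻¹).trace := by
    rw [hNdef, Matrix.trace_mul_cycle, hRR, Matrix.trace_mul_comm]
  have hdetN : N.det = (σ₁ * σ₂⁻¹).det := by
    rw [hNdef, Matrix.det_mul, Matrix.det_mul, Matrix.det_mul,
      mul_comm R.det σ₁.det, mul_assoc, ← Matrix.det_mul, hRR]
  -- eigenvalues
  set μ : Fin d → ℝ := hNh.eigenvalues with hμdef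
  set U : Matrix (Fin d) (Fin d) ℝ := (Matrix.IsHermitian.eigenvectorUnitary hNh : Matrix (Fin d) (Fin d) ℝ) with hUdef
  have hUU : star U * U = 1 := (Matrix.mem_unitaryGroup_iff'.mp (Matrix.IsHermitian.eigenvectorUnitary hNh).2)
  have hUU' : U * star U = 1 := (Matrix.mem_unitaryGroup_iff.mp (Matrix.IsHermitian.eigenvectorUnitary hNh).2)
  have hspec : N = U * Matrix.diagonal μ * star U := by
    have := hNh.spectral_theorem
    simpa [hUdef, RCLike.ofReal_real_eq_id] using this
  have htrsum : N.trace = ∑ i, μ i := by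
    rw [hspec, Matrix.trace_mul_cycle, hUU, one_mul, Matrix.trace_diagonal]
  have hdetprod : N.det = ∏ i, μ i := by
    simpa [RCLike.ofReal_real_eq_id] using hNh.det_eq_prod_eigenvalues
  -- sum of squared deviations
  have hdev : N - 1 = U * Matrix.diagonal (fun i => μ i - 1) * star U := by
    have h1 : (1 : Matrix (Fin d) (Fin d) ℝ) = U * Matrix.diagonal (fun _ => (1:ℝ)) * star U := by
      rw [Matrix.diagonal_one, mul_one, hUU']
    rw [hspec]
    conv_lhs => rw [h1]
    rw [← Matrix.sub_mul, ← Matrix.mul_sub]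
    congr 2
    rw [Matrix.diagonal_sub]
  set S : ℝ := ∑ i, (μ i - 1)^2 with hSdef
  have hSM : (M * M).trace = S := by
    have key : M * M = U * (Matrix.diagonal (fun i => μ i - 1)
        * Matrix.diagonal (fun i => μ i - 1)) * star U := by
      rw [← hNM, hdev]
      calc U * Matrix.diagonal (fun i => μ i - 1) * star U *
            (U * Matrix.diagonal (fun i => μ i - 1) * star U)
          = U * Matrix.diagonal (fun i => μ i - 1) * (star U * U)
              * (Matrix.diagonal (fun i => μ i - 1) * star U) := by noncomm_ring
        _ = U * (Matrix.diagonal (fun i => μ i - 1)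
              * Matrix.diagonal (fun i => μ i - 1)) * star U := by
            rw [hUU, mul_one]; noncomm_ring
    rw [key, Matrix.trace_mul_cycle, hUU, one_mul,
      Matrix.diagonal_mul_diagonal, Matrix.trace_diagonal, hSdef]
    congr 1; funext i; ring
  -- bound S by ε²
  have hMtr : (M * M).trace = ((σ₂⁻¹ * Δ) * (σ₂⁻¹ * Δ)).trace := by
    rw [hMdef]
    have : R * Δ * R * (R * Δ * R) = R * (Δ * σ₂⁻¹ * Δ) * R := by
      rw [← hRR]; noncomm_ring
    rw [this, Matrix.trace_mul_cycle, hRR]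
    congr 1
    noncomm_ring
  have hSle : S ≤ ε ^ 2 := by
    rw [← hSM, hMtr]
    calc ((σ₂⁻¹ * Δ) * (σ₂⁻¹ * Δ)).trace ≤ frob (σ₂⁻¹ * Δ) ^ 2 := trace_mul_self_le _
      _ ≤ ε ^ 2 := by
          have := frob_mul_le σ₂⁻¹ Δ
          have h0 := frob_nonneg (σ₂⁻¹ * Δ)
          nlinarith
  have hS0 : 0 ≤ S := Finset.sum_nonneg fun i _ => sq_nonneg _
  -- each eigenvalue is at least 1/2
  have hμhalf : ∀ i, 1/2 ≤ μ i := by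
    intro i
    have h1 : (μ i - 1)^2 ≤ S := Finset.single_le_sum (f := fun i => (μ i - 1)^2)
      (fun i _ => sq_nonneg _) (Finset.mem_univ i)
    have h2 : (μ i - 1)^2 ≤ 1/4 := by nlinarith
    nlinarith
  have hμpos : ∀ i, (0:ℝ) < μ i := fun i => lt_of_lt_of_le (by norm_num) (hμhalf i)
  -- assemble
  have hlogdet : Real.log ((σ₁ * σ₂⁻¹).det) = ∑ i, Real.log (μ i) := by
    rw [← hdetN, hdetprod, Real.log_prod]
    exact fun i _ => (hμpos i).ne'
  have htrace1 : (σ₁ * σ₂⁻¹ - 1).trace = (∑ i, μ i) - d := by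
    rw [Matrix.trace_sub, Matrix.trace_one, htrN.symm, htrsum]
    simp
  rw [htrace1, hlogdet]
  have hsum : (∑ i, μ i) - (d:ℝ) - ∑ i, Real.log (μ i)
      = ∑ i, (μ i - 1 - Real.log (μ i)) := by
    rw [Finset.sum_sub_distrib, Finset.sum_sub_distrib]
    simp [Finset.card_univ]
  rw [hsum]
  calc ∑ i, (μ i - 1 - Real.log (μ i)) ≤ ∑ i, 2 * (μ i - 1)^2 :=
        Finset.sum_le_sum fun i _ => logbound (hμhalf i)
    _ = 2 * S := by rw [hSdef, Finset.mul_sum]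
    _ ≤ 2 * ε ^ 2 := by linarith
    _ ≤ ε := by nlinarith
    _ ≤ (5/2) * frob σ₂⁻¹ * frob Δ := by rw [hε]; nlinarith [mul_nonneg (frob_nonneg σ₂⁻¹) (frob_nonneg Δ)]
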